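/- Let R be a unital G-graded ring with involution * satisfying R_g* ⊆ R_{g⁻¹}, and suppose R is strongly graded. For a graded right R-module M, let M* = {f ∈ Hom_ℤ(M,R) : f(xa) = a*f(x)} be the hermitian dual with grading (M*)_d = {f : f(M_g) ⊆ R_{g⁻¹d}}, and for an R₁-module N, let N* be the hermitian dual over R₁. Then the natural transformation φ_M : (M*)₁ → (M₁)*, given by restriction f ↦ f|_{M₁} (which lands in R₁), is an isomorphism for every finitely generated projective graded module M, and (−)₁ together with φ is a nonsingular form functor. -/

import Mathlib

open MulOpposite

set_option maxHeartbeats 1600000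

/-- Let `R` be a unital `G`-graded `*`-ring (`R_g* ⊆ R_{g⁻¹}`) which is
strongly graded.  For a graded right `R`-module `M`, the hermitian dual is
`M* = {f : M →+ R : f(xa) = a*·f(x)}` with grading `(M*)_d = {f : f(M_g) ⊆ R_{g⁻¹d}}`;
for an `R₁`-module the hermitian dual is taken over `R₁ = R_1` (maps into `R₁` that are
`R₁`-antilinear).  Then for every finitely generated projective graded module `M` the
restriction map `φ_M : (M*)₁ → (M₁)*`, `f ↦ f|_{M₁}`, is an isomorphism — i.e. `(-)₁`
together with `φ` is a nonsingular form functor.  (Bijectivity of the canonical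
restriction map is asserted below; the target consists of the additive maps
`M₁ → R` landing in `R₁` that are `R₁`-antilinear.) -/
theorem stmt_16 {G R : Type} [Group G] [DecidableEq G] [Ring R] [StarRing R]
    (𝒜 : G → AddSubgroup R) [DirectSum.Decomposition 𝒜]
    (hone : (1 : R) ∈ 𝒜 1)
    (hmul : ∀ (g h : G) (a b : R), a ∈ 𝒜 g → b ∈ 𝒜 h → a * b ∈ 𝒜 (g * h))
    (hstar : ∀ (g : G), ∀ a ∈ 𝒜 g, star a ∈ 𝒜 g⁻¹)
    -- `R` is strongly graded:
    (hstrong : ∀ g h : G, ∀ x ∈ 𝒜 (g * h),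
      x ∈ AddSubgroup.closure {z : R | ∃ a ∈ 𝒜 g, ∃ b ∈ 𝒜 h, z = a * b})
    -- `M` a graded right `R`-module …
    {M : Type} [AddCommGroup M] [Module Rᵐᵒᵖ M]
    (ℳ : G → AddSubgroup M)
    (hinternal : DirectSum.IsInternal ℳ)
    (hcompat : ∀ (g h : G) (m : M) (r : R), m ∈ ℳ g → r ∈ 𝒜 h →
      op r • m ∈ ℳ (g * h))
    -- … which is finitely generated and projective:
    (hfg : Module.Finite Rᵐᵒᵖ M) (hproj : Module.Projective Rᵐᵒᵖ M) :
    Function.Bijective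
      (fun f : {f : {f : M →+ R // ∀ (x : M) (a : R), f (op a • x) = star a * f x} //
          ∀ (g : G) (x : M), x ∈ ℳ g → f.1 x ∈ 𝒜 g⁻¹} =>
        (⟨(f.1.1).comp (ℳ 1).subtype,
          fun x => by simpa using f.2 1 x.1 x.2,
          fun x a ha hx => by simpa using f.1.2 (x : M) a⟩ :
          {u : (ℳ 1) →+ R //
            (∀ x : ℳ 1, u x ∈ 𝒜 1) ∧
            ∀ (x : ℳ 1) (a : R), a ∈ 𝒜 1 →
              ∀ hx : op a • (x : M) ∈ ℳ 1,
                u ⟨op a • (x : M), hx⟩ = star a * u x})) := by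
  classical
  -- `op` of a sum acting on `x`
  have hsmul_sum : ∀ (l : List R) (x : M),
      op l.sum • x = (l.map (fun r => op r • x)).sum := by
    intro l x
    induction l with
    | nil => simp
    | cons a t ih => simp [op_add, add_smul, ih]
  -- sum of pointwise sums
  have hsum_add : ∀ {α : Type} (l : List α) (f g : α → R),
      (l.map fun a => f a + g a).sum = (l.map f).sum + (l.map g).sum := by
    intro α l f g
    induction l with
    | nil => simp
    | cons a t ih => simp [ih]; abel
  have hsum_mul_left : ∀ {α : Type} (l : List α) (c : R) (f : α → R),
      (l.map fun a => c * f a).sum = c * (l.map f).sum := by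
    intro α l c f
    induction l with
    | nil => simp
    | cons a t ih => simp [ih, mul_add]
  have hsum_mul_right : ∀ {α : Type} (l : List α) (c : R) (f : α → R),
      (l.map fun a => f a * c).sum = (l.map f).sum * c := by
    intro α l c f
    induction l with
    | nil => simp
    | cons a t ih => simp [ih, add_mul]
  have hsum_neg : ∀ {α : Type} (l : List α) (f : α → R),
      (l.map fun a => -f a).sum = -(l.map f).sum := by
    intro α l f
    induction l with
    | nil => simp
    | cons a t ih => simp [ih]; abel
  have hsmul_sumM : ∀ {α : Type} (l : List α) (r : Rᵐᵒᵖ) (f : α → M),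
      (l.map fun a => r • f a).sum = r • (l.map f).sum := by
    intro α l r f
    induction l with
    | nil => simp
    | cons a t ih => simp [ih, smul_add]
  have hsum_star : ∀ {α : Type} (l : List α) (f : α → R),
      (l.map fun a => star (f a)).sum = star ((l.map f).sum) := by
    intro α l f
    induction l with
    | nil => simp
    | cons a t ih => simp [ih]
  -- existence of a strong-grading decomposition of `1`
  have hex : ∀ g : G, ∃ l : List (R × R),
      (∀ p ∈ l, p.1 ∈ 𝒜 g⁻¹ ∧ p.2 ∈ 𝒜 g) ∧ (l.map fun p => p.1 * p.2).sum = 1 := by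
    intro g
    have h1 : (1 : R) ∈ 𝒜 (g⁻¹ * g) := by rw [inv_mul_cancel]; exact hone
    have hcl := hstrong g⁻¹ g 1 h1
    refine AddSubgroup.closure_induction
      (p := fun x _ => ∃ l : List (R × R),
        (∀ p ∈ l, p.1 ∈ 𝒜 g⁻¹ ∧ p.2 ∈ 𝒜 g) ∧ (l.map fun p => p.1 * p.2).sum = x)
      ?_ ?_ ?_ ?_ hcl
    · rintro x ⟨a, ha, b, hb, rfl⟩
      exact ⟨[(a, b)], by simp [ha, hb], by simp⟩
    · exact ⟨[], by simp, by simp⟩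
    · rintro x y hx hy ⟨l₁, hl₁, hs₁⟩ ⟨l₂, hl₂, hs₂⟩
      refine ⟨l₁ ++ l₂, ?_, by simp [hs₁, hs₂]⟩
      intro p hp
      rcases List.mem_append.1 hp with h | h
      · exact hl₁ p h
      · exact hl₂ p h
    · rintro x hx ⟨l, hl, hs⟩
      refine ⟨l.map (fun p => (-p.1, p.2)), ?_, ?_⟩
      · intro p hp
        obtain ⟨q, hq, rfl⟩ := List.mem_map.1 hp
        exact ⟨neg_mem (hl q hq).1, (hl q hq).2⟩
      · rw [List.map_map]
        have : ((fun p : R × R => p.1 * p.2) ∘ fun p : R × R => (-p.1, p.2))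
            = fun p : R × R => -(p.1 * p.2) := by
          funext p; simp [neg_mul]
        rw [this, hsum_neg, hs]
  choose rep hrepmem hrepsum using hex
  have mem1 : ∀ (g : G) (p : R × R), p ∈ rep g → ∀ {x : M}, x ∈ ℳ g →
      op p.1 • x ∈ ℳ 1 := by
    intro g p hp x hx
    have := hcompat g g⁻¹ x p.1 hx (hrepmem g p hp).1
    simpa using this
  -- decomposition identity for elements of `M`
  have hdecomp : ∀ (g : G) (x : M),
      ((rep g).map (fun p => op p.2 • (op p.1 • x))).sum = x := by
    intro g x
    have h1 : ∀ p : R × R, op p.2 • (op p.1 • x) = op (p.1 * p.2) • x := by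
      intro p; rw [op_mul, mul_smul]
    calc ((rep g).map (fun p => op p.2 • (op p.1 • x))).sum
        = ((rep g).map (fun p => op (p.1 * p.2) • x)).sum := by simp_rw [h1]
      _ = (((rep g).map (fun p => p.1 * p.2)).map (fun r => op r • x)).sum := by
          rw [List.map_map]; rfl
      _ = op (((rep g).map (fun p => p.1 * p.2)).sum) • x := (hsmul_sum _ _).symm
      _ = x := by rw [hrepsum, op_one, one_smul]
  -- induction principle for `M`
  have hMind : ∀ (P : M → Prop), P 0 → (∀ (g : G) (m : M), m ∈ ℳ g → P m) →
      (∀ x y, P x → P y → P (x + y)) → ∀ x, P x := by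
    intro P h0 hhom hadd x
    obtain ⟨d, rfl⟩ := hinternal.surjective x
    refine DirectSum.induction_on d ?_ ?_ ?_
    · simpa using h0
    · intro i m
      rw [DirectSum.coeAddMonoidHom_of]
      exact hhom i m m.2
    · intro a b ha hb
      rw [map_add]
      exact hadd _ _ ha hb
  have hRind : ∀ (P : R → Prop), P 0 → (∀ (h : G) (a : R), a ∈ 𝒜 h → P a) →
      (∀ a b, P a → P b → P (a + b)) → ∀ a, P a := by
    intro P h0 hhom hadd a
    refine DirectSum.Decomposition.inductionOn 𝒜 h0 ?_ hadd a
    intro i c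
    exact hhom i c c.2
  constructor
  · -- injectivity
    intro f f' hff
    have hres : ∀ (x : M) (hx : x ∈ ℳ 1), f.1.1 x = f'.1.1 x := by
      intro x hx
      have h := congrArg Subtype.val hff
      have := DFunLike.congr_fun h (⟨x, hx⟩ : ℳ 1)
      simpa using this
    have hhom : ∀ (g : G) (x : M), x ∈ ℳ g → f.1.1 x = f'.1.1 x := by
      intro g x hx
      conv_lhs => rw [← hdecomp g x]
      conv_rhs => rw [← hdecomp g x]
      rw [map_list_sum, map_list_sum, List.map_map, List.map_map]
      congr 1
      refine List.map_congr_left ?_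
      intro p hp
      simp only [Function.comp_apply]
      rw [f.1.2, f'.1.2, hres _ (mem1 g p hp hx)]
    apply Subtype.ext
    apply Subtype.ext
    ext x
    exact hMind (fun y => f.1.1 y = f'.1.1 y) (by simp) hhom
      (fun a b ha hb => by
        show f.1.1 (a + b) = f'.1.1 (a + b)
        rw [map_add, map_add, ha, hb]) x
  · -- surjectivity
    rintro ⟨u, hu1, hu2⟩
    -- the candidate extension on each homogeneous component
    have fgadd : ∀ (g : G) (x y : ℳ g),
        ((rep g).attach.map (fun p => star p.1.2 *
            u ⟨op p.1.1 • ((x + y : ℳ g) : M), mem1 g p.1 p.2 (x + y).2⟩)).sum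
        = ((rep g).attach.map (fun p => star p.1.2 *
            u ⟨op p.1.1 • (x : M), mem1 g p.1 p.2 x.2⟩)).sum
          + ((rep g).attach.map (fun p => star p.1.2 *
            u ⟨op p.1.1 • (y : M), mem1 g p.1 p.2 y.2⟩)).sum := by
      intro g x y
      rw [← hsum_add]
      refine congrArg List.sum (List.map_congr_left ?_)
      intro p _
      have he : (⟨op p.1.1 • ((x + y : ℳ g) : M), mem1 g p.1 p.2 (x + y).2⟩ : ℳ 1)
          = ⟨op p.1.1 • (x : M), mem1 g p.1 p.2 x.2⟩
            + ⟨op p.1.1 • (y : M), mem1 g p.1 p.2 y.2⟩ := by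
        apply Subtype.ext
        simp [smul_add]
      rw [he, map_add, mul_add]
    set fg : ∀ g : G, (ℳ g) →+ R := fun g =>
      AddMonoidHom.mk' (fun x => ((rep g).attach.map (fun p => star p.1.2 *
        u ⟨op p.1.1 • (x : M), mem1 g p.1 p.2 x.2⟩)).sum) (fgadd g) with hfgdef
    have hfg_apply : ∀ (g : G) (z : ℳ g), fg g z =
        ((rep g).attach.map (fun p => star p.1.2 *
          u ⟨op p.1.1 • (z : M), mem1 g p.1 p.2 z.2⟩)).sum := fun g z => rfl
    set D := AddEquiv.ofBijective (DirectSum.coeAddMonoidHom ℳ) hinternal with hDdef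
    set F : M →+ R := (DirectSum.toAddMonoid fg).comp D.symm.toAddMonoidHom with hFdef
    have hF_of : ∀ (g : G) (x : M) (hx : x ∈ ℳ g), F x = fg g ⟨x, hx⟩ := by
      intro g x hx
      have hD : D.symm x = DirectSum.of (fun g => ℳ g) g ⟨x, hx⟩ := by
        apply D.injective
        rw [AddEquiv.apply_symm_apply]
        exact (DirectSum.coeAddMonoidHom_of ℳ g ⟨x, hx⟩).symm
      rw [hFdef]
      simp only [AddMonoidHom.comp_apply, AddEquiv.toAddMonoidHom_eq_coe,
        AddMonoidHom.coe_coe]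
      rw [hD, DirectSum.toAddMonoid_of]
    -- the key antilinearity computation for `u` against homogeneous elements
    have hkey : ∀ (g : G) (x : M) (hx : x ∈ ℳ g) (a : R), a ∈ 𝒜 g⁻¹ →
        ∀ h1 : op a • x ∈ ℳ 1, u ⟨op a • x, h1⟩ = star a * fg g ⟨x, hx⟩ := by
      intro g x hx a ha h1
      have hm : ∀ p : {p : R × R // p ∈ rep g},
          op (p.1.2 * a) • (op p.1.1 • x) ∈ ℳ 1 := by
        intro p
        have hy := mem1 g p.1 p.2 hx
        have hba : p.1.2 * a ∈ 𝒜 1 := by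
          have := hmul g g⁻¹ p.1.2 a (hrepmem g p.1 p.2).2 ha
          simpa using this
        have := hcompat 1 1 _ _ hy hba
        simpa using this
      have heq : (⟨op a • x, h1⟩ : ℳ 1) =
          ((rep g).attach.map (fun p =>
            (⟨op (p.1.2 * a) • (op p.1.1 • x), hm p⟩ : ℳ 1))).sum := by
        apply Subtype.ext
        have hcoe : ∀ (L : List (ℳ 1)), ((L.sum : ℳ 1) : M)
            = (L.map (fun z : ℳ 1 => (z : M))).sum := by
          intro L
          induction L with
          | nil => simp
          | cons a t ih => simp [ih]
        rw [hcoe, List.map_map]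
        simp only [Function.comp_def]
        have h2 : ∀ p : {p : R × R // p ∈ rep g},
            op (p.1.2 * a) • (op p.1.1 • x) = op a • (op p.1.2 • (op p.1.1 • x)) := by
          intro p; rw [op_mul, mul_smul]
        simp_rw [h2]
        rw [hsmul_sumM]
        rw [List.attach_map_val (l := rep g) (f := fun p => op p.2 • (op p.1 • x))]
        rw [hdecomp g x]
      rw [heq, map_list_sum, List.map_map]
      have h3 : ∀ p : {p : R × R // p ∈ rep g},
          u ⟨op (p.1.2 * a) • (op p.1.1 • x), hm p⟩
            = star a * (star p.1.2 * u ⟨op p.1.1 • x, mem1 g p.1 p.2 hx⟩) := by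
        intro p
        have hba : p.1.2 * a ∈ 𝒜 1 := by
          have := hmul g g⁻¹ p.1.2 a (hrepmem g p.1 p.2).2 ha
          simpa using this
        have := hu2 ⟨op p.1.1 • x, mem1 g p.1 p.2 hx⟩ (p.1.2 * a) hba (hm p)
        rw [this, star_mul, mul_assoc]
      calc ((rep g).attach.map (fun p =>
              u ⟨op (p.1.2 * a) • (op p.1.1 • x), hm p⟩)).sum
          = ((rep g).attach.map (fun p =>
              star a * (star p.1.2 * u ⟨op p.1.1 • x, mem1 g p.1 p.2 hx⟩))).sum := by
            simp_rw [h3]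
        _ = star a * fg g ⟨x, hx⟩ := by
            rw [hsum_mul_left, hfg_apply]
    -- `F` is antilinear
    have hanti_hom : ∀ (g h : G) (x : M) (hx : x ∈ ℳ g) (a : R), a ∈ 𝒜 h →
        F (op a • x) = star a * F x := by
      intro g h x hx a ha
      have hmem : op a • x ∈ ℳ (g * h) := hcompat g h x a hx ha
      rw [hF_of (g * h) _ hmem, hF_of g x hx]
      have h4 : ∀ p : {p : R × R // p ∈ rep (g * h)},
          op p.1.1 • (op a • x) = op (a * p.1.1) • x := by
        intro p; rw [op_mul, mul_smul]
      have h5 : ∀ p : {p : R × R // p ∈ rep (g * h)}, a * p.1.1 ∈ 𝒜 g⁻¹ := by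
        intro p
        have := hmul h (g * h)⁻¹ a p.1.1 ha (hrepmem (g * h) p.1 p.2).1
        have he : h * (g * h)⁻¹ = g⁻¹ := by group
        rwa [he] at this
      have h6 : ∀ p : {p : R × R // p ∈ rep (g * h)},
          op (a * p.1.1) • x ∈ ℳ 1 := by
        intro p
        have := hcompat g g⁻¹ x (a * p.1.1) hx (h5 p)
        simpa using this
      rw [hfg_apply (g * h)]
      have h7 : ∀ p : {p : R × R // p ∈ rep (g * h)},
          star p.1.2 * u ⟨op p.1.1 • (op a • x), mem1 (g * h) p.1 p.2 hmem⟩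
            = star (p.1.1 * p.1.2) * (star a * fg g ⟨x, hx⟩) := by
        intro p
        have harg : (⟨op p.1.1 • (op a • x), mem1 (g * h) p.1 p.2 hmem⟩ : ℳ 1)
            = ⟨op (a * p.1.1) • x, h6 p⟩ := Subtype.ext (h4 p)
        rw [harg, hkey g x hx (a * p.1.1) (h5 p) (h6 p), star_mul, star_mul]
        simp only [mul_assoc]
      simp_rw [h7]
      rw [hsum_mul_right]
      have h8 : ((rep (g * h)).attach.map
          (fun p => star (p.1.1 * p.1.2))).sum = 1 := by
        have h0 := congrArg star (hrepsum (g * h))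
        rw [star_one] at h0
        calc ((rep (g * h)).attach.map (fun p => star (p.1.1 * p.1.2))).sum
            = ((rep (g * h)).map (fun p => star (p.1 * p.2))).sum := by
              rw [List.attach_map_val (l := rep (g * h)) (f := fun p => star (p.1 * p.2))]
          _ = star (((rep (g * h)).map (fun p => p.1 * p.2)).sum) :=
              hsum_star (rep (g * h)) (fun p => p.1 * p.2)
          _ = 1 := h0
      rw [h8, one_mul]
    have hanti : ∀ (x : M) (a : R), F (op a • x) = star a * F x := by
      intro x a
      refine hMind (fun y => ∀ b : R, F (op b • y) = star b * F y) ?_ ?_ ?_ x a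
      · intro b
        show F (op b • (0 : M)) = star b * F 0
        rw [smul_zero, map_zero, mul_zero]
      · intro g m hm b
        refine hRind (fun c => F (op c • m) = star c * F m) ?_ ?_ ?_ b
        · show F (op (0 : R) • m) = star (0 : R) * F m
          rw [op_zero, zero_smul, map_zero, star_zero, zero_mul]
        · intro i c hc
          exact hanti_hom g i m hm c hc
        · intro c d hc hd
          show F (op (c + d) • m) = star (c + d) * F m
          rw [op_add, add_smul, map_add, hc, hd, star_add, add_mul]
      · intro y z hy hz b
        show F (op b • (y + z)) = star b * F (y + z)
        rw [smul_add, map_add, hy b, hz b, map_add, mul_add]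
    -- `F` is graded of degree one
    have hgraded : ∀ (g : G) (x : M), x ∈ ℳ g → F x ∈ 𝒜 g⁻¹ := by
      intro g x hx
      rw [hF_of g x hx, hfg_apply g]
      refine list_sum_mem ?_
      intro z hz
      obtain ⟨p, hp, rfl⟩ := List.mem_map.1 hz
      have h1 : star p.1.2 ∈ 𝒜 g⁻¹ := hstar g p.1.2 (hrepmem g p.1 p.2).2
      have h2 := hu1 ⟨op p.1.1 • x, mem1 g p.1 p.2 hx⟩
      have := hmul g⁻¹ 1 _ _ h1 h2
      simpa using this
    -- `F` restricts to `u` on `ℳ 1`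
    have hrestrict : ∀ x : ℳ 1, F (x : M) = u x := by
      intro x
      rw [hF_of 1 (x : M) x.2, hfg_apply 1]
      have h9 : ∀ p : {p : R × R // p ∈ rep 1},
          star p.1.2 * u ⟨op p.1.1 • (x : M), mem1 1 p.1 p.2 x.2⟩
            = star (p.1.1 * p.1.2) * u x := by
        intro p
        have hc : p.1.1 ∈ 𝒜 1 := by
          have := (hrepmem 1 p.1 p.2).1
          simpa using this
        have := hu2 x p.1.1 hc (mem1 1 p.1 p.2 x.2)
        rw [this, star_mul, ← mul_assoc]
      simp_rw [h9]
      rw [hsum_mul_right]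
      have h8 : ((rep 1).attach.map (fun p => star (p.1.1 * p.1.2))).sum = 1 := by
        have h := congrArg star (hrepsum 1)
        rw [star_one] at h
        calc ((rep 1).attach.map (fun p => star (p.1.1 * p.1.2))).sum
            = ((rep 1).map (fun p => star (p.1 * p.2))).sum := by
              rw [List.attach_map_val (l := rep 1) (f := fun p => star (p.1 * p.2))]
          _ = star (((rep 1).map (fun p => p.1 * p.2)).sum) :=
              hsum_star (rep 1) (fun p => p.1 * p.2)
          _ = 1 := h
      rw [h8, one_mul]
    refine ⟨⟨⟨F, hanti⟩, hgraded⟩, ?_⟩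
    apply Subtype.ext
    ext x
    exact hrestrict x
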